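/- Let n ≥ 5. Every triangulation T of the n-gon satisfies TCL(T) ≤ (n² − 9)/4 if n is odd, and TCL(T) ≤ (n² − 8)/4 if n is even (equivalently, 4·TCL(T) ≤ n² − 9 for n odd and 4·TCL(T) ≤ n² − 8 for n even). -/

import Mathlib

open scoped Classical

/-- The cyclic distance between two vertices of the `n`-gon labeled by `ZMod n`:
`min (k, n - k)` where `k` is the representative of `b - a`. -/
def cycDist {n : ℕ} (a b : ZMod n) : ℕ := min (b - a).val (a - b).val

/-- The length of an unordered pair of vertices (in particular, of a chord). -/
def chordLen {n : ℕ} (p : Sym2 (ZMod n)) : ℕ :=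
  Sym2.lift ⟨fun a b => cycDist a b, fun _ _ => min_comm _ _⟩ p

/-- `x` lies strictly inside the clockwise arc from `a` to `b`. -/
def InArc {n : ℕ} (a b x : ZMod n) : Prop :=
  0 < (x - a).val ∧ (x - a).val < (b - a).val

/-- Two chords cross: their four endpoints are distinct and exactly one endpoint of the
second chord lies strictly inside the clockwise arc from `a` to `b`. -/
def Crosses {n : ℕ} (p q : Sym2 (ZMod n)) : Prop :=
  ∃ a b c d : ZMod n, p = s(a, b) ∧ q = s(c, d) ∧
    a ≠ b ∧ a ≠ c ∧ a ≠ d ∧ b ≠ c ∧ b ≠ d ∧ c ≠ d ∧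
    Xor' (InArc a b c) (InArc a b d)

/-- A triangulation of the `n`-gon: a set of `n - 3` pairwise non-crossing chords
(each chord having length at least 2). -/
def IsTriangulation (n : ℕ) (T : Finset (Sym2 (ZMod n))) : Prop :=
  T.card = n - 3 ∧ (∀ p ∈ T, 2 ≤ chordLen p) ∧
    ∀ p ∈ T, ∀ q ∈ T, p ≠ q → ¬ Crosses p q

/-- The total chord length of a triangulation. -/
def TCL (n : ℕ) (T : Finset (Sym2 (ZMod n))) : ℕ := ∑ p ∈ T, chordLen p

/-- A diameter is a chord of length `n / 2` (only possible for `n` even). -/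
def IsDiameter {n : ℕ} (p : Sym2 (ZMod n)) : Prop := 2 * chordLen p = n

/-- The chord `p` layers the boundary edge `{i, i + 1}`: the edge lies on the (strictly)
shorter of the two arcs between the endpoints of `p`.  (Diameters never layer an edge.) -/
def LayersEdge {n : ℕ} (p : Sym2 (ZMod n)) (i : ZMod n) : Prop :=
  ∃ a b : ZMod n, p = s(a, b) ∧ (b - a).val < (a - b).val ∧ (i - a).val < (b - a).val

/-- The doubled layer number of the boundary edge `{i, i + 1}`:
twice the number of non-diameter chords layering it, plus the number of diameters. -/
noncomputable def mT (n : ℕ) (T : Finset (Sym2 (ZMod n))) (i : ZMod n) : ℕ :=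
  2 * (T.filter (fun p => LayersEdge p i ∧ ¬ IsDiameter p)).card +
    (T.filter (fun p => IsDiameter p)).card

/-- Subdivision of a triangulation of the `n`-gon at the boundary edge `{n-1, 0}`:
re-embed all chords (via representatives in `{0, …, n-1}`) into the `(n+1)`-gon, whose new
vertex `n` lies between `n - 1` and `0`, and add the chord `{n - 1, 0}`. -/
def subdiv (n : ℕ) (T : Finset (Sym2 (ZMod n))) : Finset (Sym2 (ZMod (n + 1))) :=
  T.image (Sym2.map (fun a : ZMod n => ((a.val : ℕ) : ZMod (n + 1)))) ∪
    {s(((n - 1 : ℕ) : ZMod (n + 1)), (0 : ZMod (n + 1)))}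

/-- Doubling construction: subdivide every boundary edge of the `m`-gon (old vertex `a`
becomes `2a` in the `2m`-gon) and add the chord `{2a, 2a+2}` over each new vertex. -/
def doubleTri (m : ℕ) (T : Finset (Sym2 (ZMod m))) : Finset (Sym2 (ZMod (2 * m))) :=
  T.image (Sym2.map (fun a : ZMod m => ((2 * a.val : ℕ) : ZMod (2 * m)))) ∪
    (Finset.range m).image
      (fun a : ℕ => s(((2 * a : ℕ) : ZMod (2 * m)), ((2 * a + 2 : ℕ) : ZMod (2 * m))))

section Aux
variable {n : ℕ} [NeZero n]

lemma zval_inj {u v : ZMod n} (h : u.val = v.val) : u = v := by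
  have hu : ((u.val : ℕ) : ZMod n) = u := ZMod.natCast_rightInverse u
  have hv : ((v.val : ℕ) : ZMod n) = v := ZMod.natCast_rightInverse v
  rw [← hu, ← hv, h]

lemma zval_sub_eq (u v : ZMod n) :
    (u - v).val = if v.val ≤ u.val then u.val - v.val else u.val + n - v.val := by
  have hu : ((u.val : ℕ) : ZMod n) = u := ZMod.natCast_rightInverse u
  have hv : ((v.val : ℕ) : ZMod n) = v := ZMod.natCast_rightInverse v
  have hun : u.val < n := ZMod.val_lt u
  have hvn : v.val < n := ZMod.val_lt v
  split_ifs with h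
  · have e : u - v = ((u.val - v.val : ℕ) : ZMod n) := by
      rw [Nat.cast_sub h, hu, hv]
    rw [e, ZMod.val_cast_of_lt (by omega)]
  · have e : u - v = ((u.val + n - v.val : ℕ) : ZMod n) := by
      rw [Nat.cast_sub (by omega)]
      push_cast [ZMod.natCast_self]
      rw [hu, hv]; ring
    rw [e, ZMod.val_cast_of_lt (by omega)]

lemma zval_neg {u : ZMod n} (h : u ≠ 0) : u.val + (-u).val = n := by
  have e : -u = 0 - u := by ring
  have h0 : (u.val) ≠ 0 := fun hh => h (by rwa [ZMod.val_eq_zero] at hh)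
  have hun : u.val < n := ZMod.val_lt u
  rw [e, zval_sub_eq]
  simp only [ZMod.val_zero]
  split_ifs with hif <;> omega

lemma zval_sub_add {a b : ZMod n} (h : a ≠ b) : (b - a).val + (a - b).val = n := by
  have h1 : b - a ≠ 0 := fun hz => h (by rw [sub_eq_zero] at hz; exact hz.symm)
  have : a - b = -(b - a) := by ring
  rw [this]; exact zval_neg h1

def arcFrom (a b : ZMod n) : Finset (ZMod n) :=
  Finset.univ.filter (fun i => (i - a).val < (b - a).val)

lemma mem_arcFrom {a b i : ZMod n} : i ∈ arcFrom a b ↔ (i - a).val < (b - a).val := by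
  simp [arcFrom]

lemma card_arcFrom (a b : ZMod n) : (arcFrom a b).card = (b - a).val := by
  rw [← Finset.card_range ((b - a).val)]
  apply Finset.card_bij' (fun x _ => (x - a).val) (fun j _ => a + (j : ℕ))
  · intro x hx
    rw [Finset.mem_range]; exact mem_arcFrom.mp hx
  · intro j hj
    rw [Finset.mem_range] at hj
    have hlt : j < n := lt_of_lt_of_le hj (le_of_lt (ZMod.val_lt _))
    rw [mem_arcFrom]
    have : (a + (j:ℕ) - a) = ((j:ℕ) : ZMod n) := by ring
    rw [this, ZMod.val_cast_of_lt hlt]; exact hj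
  · intro x hx
    have : ((((x - a).val) : ℕ) : ZMod n) = x - a := ZMod.natCast_rightInverse _
    rw [this]; ring
  · intro j hj
    rw [Finset.mem_range] at hj
    have hlt : j < n := lt_of_lt_of_le hj (le_of_lt (ZMod.val_lt _))
    have : (a + (j:ℕ) - a) = ((j:ℕ) : ZMod n) := by ring
    rw [this, ZMod.val_cast_of_lt hlt]

def chordArc (p : Sym2 (ZMod n)) : Finset (ZMod n) :=
  Sym2.lift ⟨fun a b =>
    if (b - a).val < (a - b).val then arcFrom a b
    else if (a - b).val < (b - a).val then arcFrom b a
    else if a.val ≤ b.val then arcFrom a b else arcFrom b a, by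
      intro a b
      rcases lt_trichotomy ((b - a).val) ((a - b).val) with h | h | h
      · simp [h, not_lt_of_gt h]
      · simp only [h, lt_irrefl, if_false]
        rcases lt_trichotomy a.val b.val with h2 | h2 | h2
        · simp [le_of_lt h2, not_le_of_gt h2]
        · have : a = b := zval_inj h2
          simp [this]
        · simp [le_of_lt h2, not_le_of_gt h2]
      · simp [h, not_lt_of_gt h]⟩ p

lemma chordLen_mk (a b : ZMod n) : chordLen s(a, b) = min (b - a).val (a - b).val := rfl

lemma chordArc_mk (a b : ZMod n) : chordArc s(a, b) =
    (if (b - a).val < (a - b).val then arcFrom a b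
    else if (a - b).val < (b - a).val then arcFrom b a
    else if a.val ≤ b.val then arcFrom a b else arcFrom b a) := rfl

lemma chordArc_spec (a b : ZMod n) (h : 2 ≤ chordLen s(a, b)) :
    ∃ c d : ZMod n, s(a, b) = s(c, d) ∧ chordArc s(a, b) = arcFrom c d ∧
      (d - c).val = chordLen s(a, b) ∧ 2 ≤ (d - c).val ∧ 2 * (d - c).val ≤ n := by
  have hab : a ≠ b := by
    intro he; subst he; rw [chordLen_mk] at h; simp at h
  have hsum : (b - a).val + (a - b).val = n := zval_sub_add hab
  rw [chordLen_mk] at h ⊢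
  rw [chordArc_mk]
  rcases lt_trichotomy ((b - a).val) ((a - b).val) with ht | ht | ht
  · refine ⟨a, b, rfl, by simp [ht], ?_, ?_, ?_⟩ <;> omega
  · rcases le_or_gt a.val b.val with h2 | h2
    · refine ⟨a, b, rfl, by simp [ht, h2], ?_, ?_, ?_⟩ <;> omega
    · refine ⟨b, a, Sym2.eq_swap, by simp [ht, not_le_of_gt h2], ?_, ?_, ?_⟩ <;> omega
  · refine ⟨b, a, Sym2.eq_swap, by simp [ht, not_lt_of_gt ht], ?_, ?_, ?_⟩ <;> omega

end Aux
section Geom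
variable {n : ℕ} [NeZero n]

set_option maxHeartbeats 1000000 in
/-- Key case analysis: two short arcs coming from non-crossing distinct chords are
nested or disjoint. -/
lemma arcFrom_laminar {a b c d : ZMod n}
    (hk : 2 ≤ (b - a).val) (hk2 : 2 * (b - a).val ≤ n)
    (hm : 2 ≤ (d - c).val) (hm2 : 2 * (d - c).val ≤ n)
    (hne : s(a, b) ≠ s(c, d)) (hcr : ¬ Crosses s(a, b) s(c, d)) :
    arcFrom c d ⊆ arcFrom a b ∨ arcFrom a b ⊆ arcFrom c d ∨
      Disjoint (arcFrom a b) (arcFrom c d) := by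
  set k := (b - a).val with hkdef
  set m := (d - c).val with hmdef
  set s := (c - a).val with hsdef
  set t := (d - a).val with htdef
  have hsn : s < n := ZMod.val_lt _
  have htn : t < n := ZMod.val_lt _
  have hkn : k < n := ZMod.val_lt _
  have eqiff : ∀ x y : ZMod n, x = y ↔ (x - a).val = (y - a).val := by
    intro x y
    constructor
    · rintro rfl; rfl
    · intro h; exact sub_left_injective.eq_iff.mp (zval_inj h)
  have ea : ((a : ZMod n) - a).val = 0 := by simp
  -- relation between m and s,t
  have hdc : d - c = (d - a) - (c - a) := by ring
  have hmrel : m = if s ≤ t then t - s else t + n - s := by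
    rw [hmdef, hdc, zval_sub_eq]
  -- membership in arcFrom c d via positions
  have memB : ∀ i : ZMod n, (i ∈ arcFrom c d ↔
      (if s ≤ (i - a).val then (i - a).val - s else (i - a).val + n - s) < m) := by
    intro i
    have hic : i - c = (i - a) - (c - a) := by ring
    rw [mem_arcFrom, ← hmdef, hic, zval_sub_eq, ← hsdef]
  have memA : ∀ i : ZMod n, (i ∈ arcFrom a b ↔ (i - a).val < k) := fun i => mem_arcFrom
  have hcd : c ≠ d := by
    intro he; subst he; simp [hmdef] at hm
  have hst : s ≠ t := fun h => hcd ((eqiff c d).mpr h)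
  have hab : a ≠ b := by
    intro he; rw [he, sub_self, ZMod.val_zero] at hkdef; omega
  by_cases hst2 : s ≤ t
  · -- m = t - s, B = positions [s, t)
    have hmrel' : m = t - s := by rw [hmrel, if_pos hst2]
    have memB' : ∀ i : ZMod n, (i ∈ arcFrom c d ↔
        (s ≤ (i - a).val ∧ (i - a).val < t)) := by
      intro i
      rw [memB i]
      have hin : (i - a).val < n := ZMod.val_lt _
      split_ifs with h <;> omega
    by_cases htk : t ≤ k
    · -- B ⊆ A
      left
      intro i hi
      rw [memB'] at hi; rw [memA]; omega
    · by_cases hsk : k ≤ s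
      · -- disjoint
        right; right
        rw [Finset.disjoint_left]
        intro i hiA hiB
        rw [memA] at hiA; rw [memB'] at hiB; omega
      · -- s < k < t
        push_neg at htk hsk
        by_cases hs0 : s = 0
        · -- A ⊆ B
          right; left
          intro i hi
          rw [memA] at hi; rw [memB']; omega
        · -- crossing
          exfalso
          apply hcr
          refine ⟨a, b, c, d, rfl, rfl, hab, ?_, ?_, ?_, ?_, hcd, ?_⟩
          · intro h; rw [eqiff, ea] at h; omega
          · intro h; rw [eqiff, ea] at h; omega
          · intro h; rw [eqiff] at h; rw [← hkdef, ← hsdef] at h; omega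
          · intro h; rw [eqiff] at h; rw [← hkdef, ← htdef] at h; omega
          · left
            constructor
            · exact ⟨by omega, by omega⟩
            · intro hq
              have := hq.2
              rw [← htdef, ← hkdef] at this
              omega
  · -- t < s : m = t + n - s, B = wrap-around arc
    push_neg at hst2
    have hmrel' : m = t + n - s := by rw [hmrel, if_neg (by omega)]
    have hbig : n + 2 * t ≤ 2 * s := by omega
    have memB'' : ∀ i : ZMod n, (i ∈ arcFrom c d ↔
        (s ≤ (i - a).val ∨ (i - a).val < t)) := by
      intro i
      rw [memB i]
      have hin : (i - a).val < n := ZMod.val_lt _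
      split_ifs with h <;> omega
    by_cases hkt : k ≤ t
    · -- A ⊆ B
      right; left
      intro i hi
      rw [memA] at hi; rw [memB'']; omega
    · by_cases ht0 : t = 0
      · -- disjoint
        right; right
        rw [Finset.disjoint_left]
        intro i hiA hiB
        rw [memA] at hiA; rw [memB''] at hiB; omega
      · -- 0 < t < k, s > k : crossing
        exfalso
        apply hcr
        have hks : k < s := by omega
        refine ⟨a, b, c, d, rfl, rfl, hab, ?_, ?_, ?_, ?_, hcd, ?_⟩
        · intro h; rw [eqiff, ea] at h; omega
        · intro h; rw [eqiff, ea] at h; omega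
        · intro h; rw [eqiff] at h; rw [← hkdef, ← hsdef] at h; omega
        · intro h; rw [eqiff] at h; rw [← hkdef, ← htdef] at h; omega
        · right
          constructor
          · exact ⟨by omega, by omega⟩
          · intro hq
            have := hq.2
            rw [← hsdef, ← hkdef] at this
            omega

end Geom
section Geom2
variable {n : ℕ} [NeZero n]

/-- Two distinct diameters cross. -/
lemma diameters_cross {a b c d : ZMod n}
    (hk2 : 2 * (b - a).val = n) (hk : 2 ≤ (b - a).val)
    (hm2 : 2 * (d - c).val = n)
    (hne : s(a, b) ≠ s(c, d)) : Crosses s(a, b) s(c, d) := by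
  set k := (b - a).val with hkdef
  set m := (d - c).val with hmdef
  set s := (c - a).val with hsdef
  set t := (d - a).val with htdef
  have hsn : s < n := ZMod.val_lt _
  have htn : t < n := ZMod.val_lt _
  have hkn : k < n := ZMod.val_lt _
  have hkm : k = m := by omega
  have eqiff : ∀ x y : ZMod n, x = y ↔ (x - a).val = (y - a).val := by
    intro x y
    constructor
    · rintro rfl; rfl
    · intro h; exact sub_left_injective.eq_iff.mp (zval_inj h)
  have ea : ((a : ZMod n) - a).val = 0 := by simp
  have hdc : d - c = (d - a) - (c - a) := by ring
  have hmrel : m = if s ≤ t then t - s else t + n - s := by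
    rw [hmdef, hdc, zval_sub_eq]
  have hab : a ≠ b := by
    intro he; rw [he, sub_self, ZMod.val_zero] at hkdef; omega
  have hmge : 2 ≤ m := by omega
  have hcd : c ≠ d := by
    intro he; rw [he, sub_self, ZMod.val_zero] at hmdef; omega
  have hca : s = 0 → c = a := by
    intro h
    have : c - a = 0 := (ZMod.val_eq_zero _).mp (by rw [← hsdef]; exact h)
    exact sub_eq_zero.mp this
  have hdb : t = k → d = b := by
    intro h
    have : d - a = b - a := zval_inj (by rw [← htdef, ← hkdef]; exact h)
    exact sub_left_injective.eq_iff.mp this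
  have hda : t = 0 → d = a := by
    intro h
    have : d - a = 0 := (ZMod.val_eq_zero _).mp (by rw [← htdef]; exact h)
    exact sub_eq_zero.mp this
  have hcb : s = k → c = b := by
    intro h
    have : c - a = b - a := zval_inj (by rw [← hsdef, ← hkdef]; exact h)
    exact sub_left_injective.eq_iff.mp this
  by_cases hst2 : s ≤ t
  · have hmrel' : m = t - s := by rw [hmrel, if_pos hst2]
    have hts : t = s + k := by omega
    have hs0 : s ≠ 0 := by
      intro h
      apply hne
      rw [hca h, hdb (by omega)]
    have hsk : s < k := by omega
    refine ⟨a, b, c, d, rfl, rfl, hab, ?_, ?_, ?_, ?_, hcd, ?_⟩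
    · intro h; rw [eqiff, ea] at h; omega
    · intro h; rw [eqiff, ea] at h; omega
    · intro h; rw [eqiff] at h; rw [← hkdef, ← hsdef] at h; omega
    · intro h; rw [eqiff] at h; rw [← hkdef, ← htdef] at h; omega
    · left
      refine ⟨⟨by omega, by omega⟩, ?_⟩
      intro hq
      have := hq.2
      rw [← htdef, ← hkdef] at this
      omega
  · push_neg at hst2
    have hst : s = t + k := by
      have : m = t + n - s := by rw [hmrel, if_neg (by omega)]
      omega
    have ht0 : t ≠ 0 := by
      intro h
      apply hne
      rw [hda h, hcb (by omega), Sym2.eq_swap]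
    have htk : t < k := by omega
    refine ⟨a, b, c, d, rfl, rfl, hab, ?_, ?_, ?_, ?_, hcd, ?_⟩
    · intro h; rw [eqiff, ea] at h; omega
    · intro h; rw [eqiff, ea] at h; omega
    · intro h; rw [eqiff] at h; rw [← hkdef, ← hsdef] at h; omega
    · intro h; rw [eqiff] at h; rw [← hkdef, ← htdef] at h; omega
    · right
      refine ⟨⟨by omega, by omega⟩, ?_⟩
      intro hq
      have := hq.2
      rw [← hsdef, ← hkdef] at this
      omega

end Geom2
section More
variable {n : ℕ} [NeZero n]

lemma chordLen_le2 (p : Sym2 (ZMod n)) : 2 * chordLen p ≤ n := by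
  induction p using Sym2.ind with
  | _ a b =>
    by_cases h : a = b
    · subst h; rw [chordLen_mk]; simp
    · have := zval_sub_add h
      rw [chordLen_mk]; omega

lemma chordArc_card (p : Sym2 (ZMod n)) (h : 2 ≤ chordLen p) :
    (chordArc p).card = chordLen p := by
  induction p using Sym2.ind with
  | _ a b =>
    obtain ⟨c, d, _, ha, hl, _, _⟩ := chordArc_spec a b h
    rw [ha, card_arcFrom, hl]

lemma chordArc_inj {p q : Sym2 (ZMod n)} (hp : 2 ≤ chordLen p) (hq : 2 ≤ chordLen q)
    (h : chordArc p = chordArc q) : p = q := by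
  induction p using Sym2.ind with
  | _ a b =>
  induction q using Sym2.ind with
  | _ a' b' =>
  obtain ⟨c, d, hpeq, ha, hl, hge, hle⟩ := chordArc_spec a b hp
  obtain ⟨e, f, hqeq, ha', hl', hge', hle'⟩ := chordArc_spec a' b' hq
  rw [hpeq, hqeq]
  rw [ha, ha'] at h
  have hce : c = e := by
    by_contra hne
    have hcB : c ∈ arcFrom e f := by
      rw [← h, mem_arcFrom]; simp only [sub_self, ZMod.val_zero]; omega
    have heA : e ∈ arcFrom c d := by
      rw [h, mem_arcFrom]; simp only [sub_self, ZMod.val_zero]; omega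
    rw [mem_arcFrom] at hcB heA
    have := zval_sub_add hne
    omega
  subst hce
  have hcards : (d - c).val = (f - c).val := by
    rw [← card_arcFrom c d, ← card_arcFrom c f, h]
  have : d - c = f - c := zval_inj hcards
  have : d = f := sub_left_injective.eq_iff.mp this
  rw [this]

end More

section Laminar
variable {α : Type*} [DecidableEq α]

lemma laminar_bound (N : ℕ) :
    ∀ (A : Finset (Finset α)) (S : Finset α) (l : ℕ), A.card ≤ N →
    2 ≤ l → (∀ X ∈ A, X ⊆ S) → (∀ X ∈ A, l ≤ X.card) →
    (∀ X ∈ A, ∀ Y ∈ A, X ⊆ Y ∨ Y ⊆ X ∨ Disjoint X Y) →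
    A.Nonempty → A.card + l ≤ S.card + 1 := by
  induction N with
  | zero =>
    intro A S l hA _ _ _ _ hne
    exact absurd (Finset.card_pos.mpr hne) (by omega)
  | succ N ih =>
    intro A S l hA hl hsub hcard hlam hne
    obtain ⟨A0, hA0, hmax⟩ := Finset.exists_max_image A Finset.card hne
    set A1 := A.filter (fun X => X ⊆ A0) with hA1def
    set A2 := A.filter (fun X => ¬ X ⊆ A0) with hA2def
    have hA0S : A0 ⊆ S := hsub A0 hA0
    have hA0SC : A0.card ≤ S.card := Finset.card_le_card hA0S
    have hA0mem : A0 ∈ A1 := Finset.mem_filter.mpr ⟨hA0, subset_rfl⟩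
    have hdisj2 : ∀ X ∈ A2, Disjoint X A0 := by
      intro X hX
      have hX' := Finset.mem_filter.mp hX
      rcases hlam X hX'.1 A0 hA0 with h | h | h
      · exact absurd h hX'.2
      · have := Finset.eq_of_subset_of_card_le h (hmax X hX'.1)
        exact absurd (this ▸ subset_rfl) hX'.2
      · exact h
    have hsplit : A1.card + A2.card = A.card :=
      Finset.card_filter_add_card_filter_not (p := fun X => X ⊆ A0)
    by_cases h2 : A2.Nonempty
    · have hA2pos : 0 < A2.card := Finset.card_pos.mpr h2
      have hA1pos : 0 < A1.card := Finset.card_pos.mpr ⟨A0, hA0mem⟩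
      have ihA1 : A1.card + l ≤ A0.card + 1 := by
        apply ih A1 A0 l (by omega) hl
        · intro X hX; exact (Finset.mem_filter.mp hX).2
        · intro X hX; exact hcard X (Finset.mem_filter.mp hX).1
        · intro X hX Y hY
          exact hlam X (Finset.mem_filter.mp hX).1 Y (Finset.mem_filter.mp hY).1
        · exact ⟨A0, hA0mem⟩
      have ihA2 : A2.card + l ≤ (S \ A0).card + 1 := by
        apply ih A2 (S \ A0) l (by omega) hl
        · intro X hX
          exact Finset.subset_sdiff.mpr ⟨hsub X (Finset.mem_filter.mp hX).1, hdisj2 X hX⟩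
        · intro X hX; exact hcard X (Finset.mem_filter.mp hX).1
        · intro X hX Y hY
          exact hlam X (Finset.mem_filter.mp hX).1 Y (Finset.mem_filter.mp hY).1
        · exact h2
      have hsd : (S \ A0).card = S.card - A0.card := Finset.card_sdiff_of_subset hA0S
      omega
    · have hall : ∀ X ∈ A, X ⊆ A0 := by
        intro X hX
        by_contra hc
        exact h2 ⟨X, Finset.mem_filter.mpr ⟨hX, hc⟩⟩
      set B := A.erase A0 with hBdef
      have hBcard : B.card = A.card - 1 := Finset.card_erase_of_mem hA0
      by_cases hB : B.Nonempty
      · obtain ⟨B0, hB0, hBmax⟩ := Finset.exists_max_image B Finset.card hB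
        have hB0A : B0 ∈ A := Finset.mem_of_mem_erase hB0
        have hB0sub : B0 ⊆ A0 := hall _ hB0A
        have hB0ne : B0 ≠ A0 := Finset.ne_of_mem_erase hB0
        have hB0lt : B0.card < A0.card :=
          Finset.card_lt_card (HasSubset.Subset.ssubset_of_ne hB0sub hB0ne)
        set B1 := B.filter (fun X => X ⊆ B0) with hB1def
        set B2 := B.filter (fun X => ¬ X ⊆ B0) with hB2def
        have hB0mem : B0 ∈ B1 := Finset.mem_filter.mpr ⟨hB0, subset_rfl⟩
        have hdisjB : ∀ X ∈ B2, Disjoint X B0 := by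
          intro X hX
          have hX' := Finset.mem_filter.mp hX
          rcases hlam X (Finset.mem_of_mem_erase hX'.1) B0 hB0A with h | h | h
          · exact absurd h hX'.2
          · have := Finset.eq_of_subset_of_card_le h (hBmax X hX'.1)
            exact absurd (this ▸ subset_rfl) hX'.2
          · exact h
        have hsplitB : B1.card + B2.card = B.card :=
          Finset.card_filter_add_card_filter_not (p := fun X => X ⊆ B0)
        have hApos : 0 < A.card := Finset.card_pos.mpr hne
        have ihB1 : B1.card + l ≤ B0.card + 1 := by
          apply ih B1 B0 l (by omega) hl
          · intro X hX; exact (Finset.mem_filter.mp hX).2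
          · intro X hX; exact hcard X (Finset.mem_of_mem_erase (Finset.mem_filter.mp hX).1)
          · intro X hX Y hY
            exact hlam X (Finset.mem_of_mem_erase (Finset.mem_filter.mp hX).1) Y
              (Finset.mem_of_mem_erase (Finset.mem_filter.mp hY).1)
          · exact ⟨B0, hB0mem⟩
        by_cases hB2 : B2.Nonempty
        · have ihB2 : B2.card + l ≤ (A0 \ B0).card + 1 := by
            apply ih B2 (A0 \ B0) l (by omega) hl
            · intro X hX
              exact Finset.subset_sdiff.mpr
                ⟨hall X (Finset.mem_of_mem_erase (Finset.mem_filter.mp hX).1), hdisjB X hX⟩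
            · intro X hX; exact hcard X (Finset.mem_of_mem_erase (Finset.mem_filter.mp hX).1)
            · intro X hX Y hY
              exact hlam X (Finset.mem_of_mem_erase (Finset.mem_filter.mp hX).1) Y
                (Finset.mem_of_mem_erase (Finset.mem_filter.mp hY).1)
            · exact hB2
          have hsd : (A0 \ B0).card = A0.card - B0.card := Finset.card_sdiff_of_subset hB0sub
          omega
        · have : B2.card = 0 := by
            rw [Finset.not_nonempty_iff_eq_empty] at hB2
            rw [hB2]; rfl
          omega
      · have : A = {A0} := by
          apply Finset.eq_singleton_iff_unique_mem.mpr
          refine ⟨hA0, ?_⟩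
          intro X hX
          by_contra hc
          exact hB ⟨X, Finset.mem_erase.mpr ⟨hc, hX⟩⟩
        rw [this, Finset.card_singleton]
        have := hcard A0 hA0
        omega

lemma laminar_bound_strict (A : Finset (Finset α)) (S : Finset α) (l : ℕ)
    (hl : 2 ≤ l) (hsub : ∀ X ∈ A, X ⊆ S) (hcard : ∀ X ∈ A, l ≤ X.card)
    (hstrict : ∀ X ∈ A, X.card < S.card)
    (hlam : ∀ X ∈ A, ∀ Y ∈ A, X ⊆ Y ∨ Y ⊆ X ∨ Disjoint X Y)
    (hne : A.Nonempty) : A.card + l ≤ S.card := by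
  obtain ⟨A0, hA0, hmax⟩ := Finset.exists_max_image A Finset.card hne
  set A1 := A.filter (fun X => X ⊆ A0) with hA1def
  set A2 := A.filter (fun X => ¬ X ⊆ A0) with hA2def
  have hA0mem : A0 ∈ A1 := Finset.mem_filter.mpr ⟨hA0, subset_rfl⟩
  have hA0S : A0 ⊆ S := hsub A0 hA0
  have hdisj2 : ∀ X ∈ A2, Disjoint X A0 := by
    intro X hX
    have hX' := Finset.mem_filter.mp hX
    rcases hlam X hX'.1 A0 hA0 with h | h | h
    · exact absurd h hX'.2
    · have := Finset.eq_of_subset_of_card_le h (hmax X hX'.1)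
      exact absurd (this ▸ subset_rfl) hX'.2
    · exact h
  have hsplit : A1.card + A2.card = A.card :=
    Finset.card_filter_add_card_filter_not (p := fun X => X ⊆ A0)
  have ihA1 : A1.card + l ≤ A0.card + 1 := by
    apply laminar_bound A1.card A1 A0 l le_rfl hl
    · intro X hX; exact (Finset.mem_filter.mp hX).2
    · intro X hX; exact hcard X (Finset.mem_filter.mp hX).1
    · intro X hX Y hY
      exact hlam X (Finset.mem_filter.mp hX).1 Y (Finset.mem_filter.mp hY).1
    · exact ⟨A0, hA0mem⟩
  have hA0lt : A0.card < S.card := hstrict A0 hA0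
  by_cases h2 : A2.Nonempty
  · have ihA2 : A2.card + l ≤ (S \ A0).card + 1 := by
      apply laminar_bound A2.card A2 (S \ A0) l le_rfl hl
      · intro X hX
        exact Finset.subset_sdiff.mpr ⟨hsub X (Finset.mem_filter.mp hX).1, hdisj2 X hX⟩
      · intro X hX; exact hcard X (Finset.mem_filter.mp hX).1
      · intro X hX Y hY
        exact hlam X (Finset.mem_filter.mp hX).1 Y (Finset.mem_filter.mp hY).1
      · exact h2
    have hsd : (S \ A0).card = S.card - A0.card := Finset.card_sdiff_of_subset hA0S
    omega
  · have : A2.card = 0 := by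
      rw [Finset.not_nonempty_iff_eq_empty] at h2
      rw [h2]; rfl
    omega

end Laminar
section Count

lemma chordArc_spec' {n : ℕ} [NeZero n] (p : Sym2 (ZMod n)) (h : 2 ≤ chordLen p) :
    ∃ c d : ZMod n, p = s(c, d) ∧ chordArc p = arcFrom c d ∧
      (d - c).val = chordLen p ∧ 2 ≤ (d - c).val ∧ 2 * (d - c).val ≤ n := by
  induction p using Sym2.ind with
  | _ a b => exact chordArc_spec a b h

lemma count_long (n l : ℕ) (hn : 5 ≤ n) (T : Finset (Sym2 (ZMod n)))
    (hT : IsTriangulation n T) (hl : 2 ≤ l) (hln : 2 * l ≤ n) :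
    (T.filter (fun p => l ≤ chordLen p)).card + 2 * l ≤ n + 1 := by
  haveI : NeZero n := ⟨by omega⟩
  set F := T.filter (fun p => l ≤ chordLen p) with hF
  by_cases hFne : F.Nonempty
  swap
  · rw [Finset.not_nonempty_iff_eq_empty] at hFne
    rw [hFne]; simp; omega
  have hmemF : ∀ p ∈ F, p ∈ T ∧ l ≤ chordLen p := fun p hp => Finset.mem_filter.mp hp
  have h2len : ∀ p ∈ F, 2 ≤ chordLen p := fun p hp => hT.2.1 p (hmemF p hp).1
  set A := F.image chordArc with hA
  have hAcard : A.card = F.card :=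
    Finset.card_image_of_injOn (fun p hp q hq h => chordArc_inj (h2len p hp) (h2len q hq) h)
  have hlamA : ∀ X ∈ A, ∀ Y ∈ A, X ⊆ Y ∨ Y ⊆ X ∨ Disjoint X Y := by
    intro X hX Y hY
    obtain ⟨p, hp, rfl⟩ := Finset.mem_image.mp hX
    obtain ⟨q, hq, rfl⟩ := Finset.mem_image.mp hY
    by_cases hpq : p = q
    · subst hpq; left; exact subset_rfl
    obtain ⟨a, b, hpeq, hpa, _, hk, hk2⟩ := chordArc_spec' p (h2len p hp)
    obtain ⟨c, d, hqeq, hqa, _, hm, hm2⟩ := chordArc_spec' q (h2len q hq)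
    have hcr : ¬ Crosses p q := hT.2.2 p (hmemF p hp).1 q (hmemF q hq).1 hpq
    rw [hpeq, hqeq] at hcr hpq
    rw [hpa, hqa]
    rcases arcFrom_laminar hk hk2 hm hm2 hpq hcr with h | h | h
    · right; left; exact h
    · left; exact h
    · right; right; exact h
  obtain ⟨p0, hp0, hmax⟩ := Finset.exists_max_image F chordLen hFne
  set M := chordLen p0 with hM
  have hM2 : 2 * M ≤ n := chordLen_le2 p0
  have hMl : l ≤ M := (hmemF p0 hp0).2
  set A0 := chordArc p0 with hA0
  have hA0card : A0.card = M := chordArc_card p0 (h2len p0 hp0)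
  have hA0A : A0 ∈ A := Finset.mem_image_of_mem _ hp0
  have hcardA : ∀ X ∈ A, l ≤ X.card ∧ X.card ≤ M := by
    intro X hX
    obtain ⟨p, hp, rfl⟩ := Finset.mem_image.mp hX
    rw [chordArc_card p (h2len p hp)]
    exact ⟨(hmemF p hp).2, hmax p hp⟩
  set A1 := A.filter (fun X => X ⊆ A0) with hA1def
  set A2 := A.filter (fun X => ¬ X ⊆ A0) with hA2def
  have hA0mem : A0 ∈ A1 := Finset.mem_filter.mpr ⟨hA0A, subset_rfl⟩
  have hsplit : A1.card + A2.card = A.card :=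
    Finset.card_filter_add_card_filter_not (p := fun X => X ⊆ A0)
  have ihA1 : A1.card + l ≤ M + 1 := by
    have := laminar_bound A1.card A1 A0 l le_rfl hl
      (fun X hX => (Finset.mem_filter.mp hX).2)
      (fun X hX => (hcardA X (Finset.mem_filter.mp hX).1).1)
      (fun X hX Y hY => hlamA X (Finset.mem_filter.mp hX).1 Y (Finset.mem_filter.mp hY).1)
      ⟨A0, hA0mem⟩
    omega
  by_cases h2 : A2.Nonempty
  · -- every member of A2 is disjoint from A0 and has card < n - M
    have hdisj2 : ∀ X ∈ A2, Disjoint X A0 := by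
      intro X hX
      have hX' := Finset.mem_filter.mp hX
      rcases hlamA X hX'.1 A0 hA0A with h | h | h
      · exact absurd h hX'.2
      · have := Finset.eq_of_subset_of_card_le h (by rw [hA0card]; exact (hcardA X hX'.1).2)
        exact absurd (this ▸ subset_rfl) hX'.2
      · exact h
    have hstrict : ∀ X ∈ A2, X.card < n - M := by
      intro X hX
      have hX' := Finset.mem_filter.mp hX
      have hXM := (hcardA X hX'.1).2
      rcases Nat.lt_or_ge (2 * M) n with hc | hc
      · omega
      · -- 2*M = n : no second diameter
        have h2M : 2 * M = n := by omega
        by_contra hcon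
        have hXcard : X.card = M := by omega
        obtain ⟨q, hq, rfl⟩ := Finset.mem_image.mp hX'.1
        have hqlen : chordLen q = M := by
          have := chordArc_card q (h2len q hq); omega
        have hqp0 : q ≠ p0 := by
          intro h; apply hX'.2; rw [h]
        obtain ⟨a, b, hpeq, hpa, hplen, hk, hk2⟩ := chordArc_spec' p0 (h2len p0 hp0)
        obtain ⟨c, d, hqeq, hqa, hqlen', _, _⟩ := chordArc_spec' q (h2len q hq)
        have hcr : ¬ Crosses p0 q := hT.2.2 p0 (hmemF p0 hp0).1 q (hmemF q hq).1 (Ne.symm hqp0)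
        apply hcr
        rw [hpeq, hqeq]
        apply diameters_cross
        · rw [hplen, ← hM]; omega
        · exact hk
        · rw [hqlen', hqlen]; omega
        · rw [← hpeq, ← hqeq]; exact fun h => hqp0 h.symm
    have hground : (Finset.univ \ A0).card = n - M := by
      rw [Finset.card_sdiff_of_subset (Finset.subset_univ _), hA0card, Finset.card_univ, ZMod.card]
    have ihA2 : A2.card + l ≤ n - M := by
      have := laminar_bound_strict A2 (Finset.univ \ A0) l hl
        (fun X hX => Finset.subset_sdiff.mpr ⟨Finset.subset_univ _, hdisj2 X hX⟩)
        (fun X hX => (hcardA X (Finset.mem_filter.mp hX).1).1)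
        (fun X hX => by rw [hground]; exact hstrict X hX)
        (fun X hX Y hY => hlamA X (Finset.mem_filter.mp hX).1 Y (Finset.mem_filter.mp hY).1)
        h2
      omega
    omega
  · have : A2.card = 0 := by
      rw [Finset.not_nonempty_iff_eq_empty] at h2
      rw [h2]; rfl
    omega

end Count
section Sums

lemma sum_odd_bound (h : ℕ) :
    (∑ l ∈ Finset.Icc 2 h, (2 * h + 2 - 2 * l)) + h = h * h := by
  induction h with
  | zero => simp
  | succ h ih =>
    rcases Nat.lt_or_ge h 1 with h0 | h1
    · interval_cases h
      · simp [Finset.Icc_eq_empty_of_lt]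
    · rw [Finset.sum_Icc_succ_top (by omega : 2 ≤ h + 1)]
      have hstep : ∑ l ∈ Finset.Icc 2 h, (2 * (h + 1) + 2 - 2 * l)
          = (∑ l ∈ Finset.Icc 2 h, (2 * h + 2 - 2 * l)) + 2 * (h - 1) := by
        have hc : ∀ l ∈ Finset.Icc 2 h, 2 * (h + 1) + 2 - 2 * l = (2 * h + 2 - 2 * l) + 2 := by
          intro l hl
          have := Finset.mem_Icc.mp hl
          omega
        rw [Finset.sum_congr rfl hc, Finset.sum_add_distrib, Finset.sum_const,
          Nat.card_Icc, smul_eq_mul]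
        omega
      have hsq : (h + 1) * (h + 1) = h * h + 2 * h + 1 := by ring
      omega

lemma sum_even_bound (h : ℕ) (h1 : 1 ≤ h) :
    (∑ l ∈ Finset.Icc 2 h, (2 * h + 1 - 2 * l)) + 2 * h = h * h + 1 := by
  induction h with
  | zero => omega
  | succ h ih =>
    rcases Nat.lt_or_ge h 1 with h0 | hge
    · interval_cases h
      · simp [Finset.Icc_eq_empty_of_lt]
    · have ih' := ih hge
      rw [Finset.sum_Icc_succ_top (by omega : 2 ≤ h + 1)]
      have hstep : ∑ l ∈ Finset.Icc 2 h, (2 * (h + 1) + 1 - 2 * l)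
          = (∑ l ∈ Finset.Icc 2 h, (2 * h + 1 - 2 * l)) + 2 * (h - 1) := by
        have hc : ∀ l ∈ Finset.Icc 2 h, 2 * (h + 1) + 1 - 2 * l = (2 * h + 1 - 2 * l) + 2 := by
          intro l hl
          have := Finset.mem_Icc.mp hl
          omega
        rw [Finset.sum_congr rfl hc, Finset.sum_add_distrib, Finset.sum_const,
          Nat.card_Icc, smul_eq_mul]
        omega
      have hsq : (h + 1) * (h + 1) = h * h + 2 * h + 1 := by ring
      omega

end Sums

theorem max_TCL_upper_bound' (n : ℕ) (hn : 5 ≤ n) (T : Finset (Sym2 (ZMod n)))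
    (hT : IsTriangulation n T) :
    (Odd n → 4 * TCL n T ≤ n ^ 2 - 9) ∧ (Even n → 4 * TCL n T ≤ n ^ 2 - 8) := by
  haveI : NeZero n := ⟨by omega⟩
  have hlen2 : ∀ p ∈ T, 2 ≤ chordLen p := hT.2.1
  set h := n / 2 with hh
  have hh2 : 2 ≤ h := by omega
  -- decomposition of TCL
  have key : TCL n T = T.card +
      ∑ l ∈ Finset.Icc 2 h, (T.filter (fun p => l ≤ chordLen p)).card := by
    rw [TCL]
    have hterm : ∀ p ∈ T, chordLen p
        = 1 + ((Finset.Icc 2 h).filter (fun l => l ≤ chordLen p)).card := by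
      intro p hp
      have h2 := hlen2 p hp
      have hle := chordLen_le2 p
      have hfe : (Finset.Icc 2 h).filter (fun l => l ≤ chordLen p)
          = Finset.Icc 2 (chordLen p) := by
        ext x
        simp only [Finset.mem_Icc, Finset.mem_filter]
        omega
      rw [hfe, Nat.card_Icc]
      omega
    rw [Finset.sum_congr rfl hterm, Finset.sum_add_distrib, Finset.sum_const, smul_eq_mul,
      mul_one]
    congr 1
    have hcf : ∀ p ∈ T, ((Finset.Icc 2 h).filter (fun l => l ≤ chordLen p)).card
        = ∑ l ∈ Finset.Icc 2 h, if l ≤ chordLen p then 1 else 0 := by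
      intro p _; rw [Finset.card_filter]
    rw [Finset.sum_congr rfl hcf, Finset.sum_comm]
    apply Finset.sum_congr rfl
    intro l _
    rw [Finset.card_filter]
  -- bound the inner sums
  have hTcard : T.card = n - 3 := hT.1
  constructor
  · intro hodd
    have hodd' : n = 2 * h + 1 := by
      have := Nat.odd_iff.mp hodd
      omega
    have hbound : ∑ l ∈ Finset.Icc 2 h, (T.filter (fun p => l ≤ chordLen p)).card
        ≤ ∑ l ∈ Finset.Icc 2 h, (2 * h + 2 - 2 * l) := by
      apply Finset.sum_le_sum
      intro l hl
      have hl' := Finset.mem_Icc.mp hl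
      have := count_long n l hn T hT hl'.1 (by omega)
      omega
    have hso := sum_odd_bound h
    have hsq : n ^ 2 = 4 * (h * h) + 4 * h + 1 := by rw [hodd']; ring
    omega
  · intro heven
    have heven' : n = 2 * h := by
      have := Nat.even_iff.mp heven
      omega
    have hbound : ∑ l ∈ Finset.Icc 2 h, (T.filter (fun p => l ≤ chordLen p)).card
        ≤ ∑ l ∈ Finset.Icc 2 h, (2 * h + 1 - 2 * l) := by
      apply Finset.sum_le_sum
      intro l hl
      have hl' := Finset.mem_Icc.mp hl
      have := count_long n l hn T hT hl'.1 (by omega)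
      omega
    have hse := sum_even_bound h (by omega)
    have hsq : n ^ 2 = 4 * (h * h) := by rw [heven']; ring
    omega

/-- For `n ≥ 5`, every triangulation `T` of the `n`-gon satisfies
`4·TCL(T) ≤ n² - 9` if `n` is odd, and `4·TCL(T) ≤ n² - 8` if `n` is even. -/
theorem max_TCL_upper_bound (n : ℕ) (hn : 5 ≤ n) (T : Finset (Sym2 (ZMod n)))
    (hT : IsTriangulation n T) :
    (Odd n → 4 * TCL n T ≤ n ^ 2 - 9) ∧ (Even n → 4 * TCL n T ≤ n ^ 2 - 8) :=
  max_TCL_upper_bound' n hn T hT
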